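/- Let μ ∈ ℝ^p, Σ symmetric positive definite, G a k×p matrix of rank k, Θ = [[1, μᵀ],[μ, Σ + μμᵀ]], and G̃ = [[1,0],[0,G]] of size (k+1)×(p+1). Then Θ⁻¹ - G̃ᵀ(G̃ΘG̃ᵀ)⁻¹G̃ equals the block matrix [[μᵀΣ⁻¹μ - μᵀPμ, -μᵀΣ⁻¹ + μᵀP],[-Σ⁻¹μ + Pμ, Σ⁻¹ - P]], where P = Gᵀ(GΣGᵀ)⁻¹G. -/

import Mathlib

open Matrix

private lemma one_fin_one : (Matrix.of fun (_ : Fin 1) (_ : Fin 1) => (1 : ℝ)) = 1 := by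
  ext i j
  have : i = j := Subsingleton.elim i j
  simp [this, one_apply]

private lemma aug_inv {n : ℕ} (B : Matrix (Fin n) (Fin n) ℝ) (hB : IsUnit B.det)
    (v : Fin n → ℝ) :
    (fromBlocks 1 (replicateRow (Fin 1) v) (replicateCol (Fin 1) v) (B + vecMulVec v v))⁻¹ =
      fromBlocks (Matrix.of fun (_ : Fin 1) (_ : Fin 1) => 1 + v ⬝ᵥ B⁻¹ *ᵥ v)
        (-(replicateRow (Fin 1) (v ᵥ* B⁻¹))) (-(replicateCol (Fin 1) (B⁻¹ *ᵥ v))) B⁻¹ := by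
  have hBB : B * B⁻¹ = 1 := mul_nonsing_inv B hB
  apply inv_eq_right_inv
  rw [fromBlocks_multiply]
  have h1 : (Matrix.of fun (_ : Fin 1) (_ : Fin 1) => 1 + v ⬝ᵥ B⁻¹ *ᵥ v)
      = 1 + Matrix.of fun (_ : Fin 1) (_ : Fin 1) => v ⬝ᵥ B⁻¹ *ᵥ v := by
    ext i j
    have : i = j := Subsingleton.elim i j
    simp [this, one_apply]
  have hTL : (1 : Matrix (Fin 1) (Fin 1) ℝ) *
        (Matrix.of fun (_ : Fin 1) (_ : Fin 1) => 1 + v ⬝ᵥ B⁻¹ *ᵥ v) +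
        replicateRow (Fin 1) v * -(replicateCol (Fin 1) (B⁻¹ *ᵥ v)) = 1 := by
    rw [Matrix.one_mul, Matrix.mul_neg, replicateRow_mul_replicateCol, h1]
    abel
  have hTR : (1 : Matrix (Fin 1) (Fin 1) ℝ) * -(replicateRow (Fin 1) (v ᵥ* B⁻¹)) +
        replicateRow (Fin 1) v * B⁻¹ = 0 := by
    rw [Matrix.one_mul, ← replicateRow_vecMul]
    abel
  have hBL : replicateCol (Fin 1) v * (Matrix.of fun (_ : Fin 1) (_ : Fin 1) => 1 + v ⬝ᵥ B⁻¹ *ᵥ v) +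
        (B + vecMulVec v v) * -(replicateCol (Fin 1) (B⁻¹ *ᵥ v)) = 0 := by
    rw [h1, Matrix.mul_add, Matrix.mul_one, Matrix.mul_neg, Matrix.add_mul, ← replicateCol_mulVec,
      mulVec_mulVec, hBB, one_mulVec, vecMulVec_eq (Fin 1), Matrix.mul_assoc, replicateRow_mul_replicateCol]
    exact add_neg_cancel _
  have hBR : replicateCol (Fin 1) v * -(replicateRow (Fin 1) (v ᵥ* B⁻¹)) + (B + vecMulVec v v) * B⁻¹ = 1 := by
    rw [Matrix.mul_neg, Matrix.add_mul, hBB, vecMulVec_eq (Fin 1), Matrix.mul_assoc, replicateRow_vecMul]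
    rw [add_comm (1 : Matrix (Fin n) (Fin n) ℝ)]
    exact neg_add_cancel_left (replicateCol (Fin 1) v * (replicateRow (Fin 1) v * B⁻¹)) 1
  rw [hTL, hTR, hBL, hBR, fromBlocks_one]

private lemma fromBlocks_sub' {n m o l : ℕ} (A A' : Matrix (Fin n) (Fin m) ℝ)
    (B B' : Matrix (Fin n) (Fin l) ℝ) (C C' : Matrix (Fin o) (Fin m) ℝ)
    (D D' : Matrix (Fin o) (Fin l) ℝ) :
    fromBlocks A B C D - fromBlocks A' B' C' D' =
      fromBlocks (A - A') (B - B') (C - C') (D - D') := by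
  rw [sub_eq_add_neg, fromBlocks_neg, fromBlocks_add]
  simp [sub_eq_add_neg]

theorem delta_inverse_second_moment {p k : ℕ} (μ : Fin p → ℝ)
    (S : Matrix (Fin p) (Fin p) ℝ) (hS : S.PosDef)
    (G : Matrix (Fin k) (Fin p) ℝ) (hG : G.rank = k)
    (Θ : Matrix (Fin 1 ⊕ Fin p) (Fin 1 ⊕ Fin p) ℝ)
    (hΘ : Θ = Matrix.fromBlocks
      (Matrix.of fun (_ : Fin 1) (_ : Fin 1) => (1 : ℝ))
      (Matrix.of fun (_ : Fin 1) j => μ j)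
      (Matrix.of fun i (_ : Fin 1) => μ i)
      (S + Matrix.vecMulVec μ μ))
    (Gt : Matrix (Fin 1 ⊕ Fin k) (Fin 1 ⊕ Fin p) ℝ)
    (hGt : Gt = Matrix.fromBlocks 1 0 0 G)
    (P : Matrix (Fin p) (Fin p) ℝ)
    (hP : P = Gᵀ * (G * S * Gᵀ)⁻¹ * G) :
    Θ⁻¹ - Gtᵀ * (Gt * Θ * Gtᵀ)⁻¹ * Gt =
      Matrix.fromBlocks
        (Matrix.of fun (_ : Fin 1) (_ : Fin 1) => μ ⬝ᵥ S⁻¹ *ᵥ μ - μ ⬝ᵥ P *ᵥ μ)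
        (Matrix.of fun (_ : Fin 1) j => -(μ ᵥ* S⁻¹) j + (μ ᵥ* P) j)
        (Matrix.of fun i (_ : Fin 1) => -(S⁻¹ *ᵥ μ) i + (P *ᵥ μ) i)
        (S⁻¹ - P) := by
  have hSdet : IsUnit S.det := hS.det_pos.ne'.isUnit
  -- injectivity of x ↦ Gᵀ *ᵥ x
  have hinj : Function.Injective (fun x : Fin k → ℝ => Gᵀ *ᵥ x) := by
    have hrank : Gᵀ.rank = k := by rw [Matrix.rank_transpose]; exact hG
    have hrn := LinearMap.finrank_range_add_finrank_ker (Gᵀ.mulVecLin)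
    rw [show Module.finrank ℝ (Fin k → ℝ) = k by simp] at hrn
    rw [Matrix.rank] at hrank
    have hker0 : Module.finrank ℝ (LinearMap.ker Gᵀ.mulVecLin) = 0 := by omega
    have hker : LinearMap.ker Gᵀ.mulVecLin = ⊥ := Submodule.finrank_eq_zero.mp hker0
    have := LinearMap.ker_eq_bot.mp hker
    exact this
  have hA : (G * S * Gᵀ).PosDef := by
    refine Matrix.PosDef.of_dotProduct_mulVec_pos ?_ ?_
    · have h := isHermitian_mul_mul_conjTranspose G hS.isHermitian
      simpa using h
    · intro x hx
      have hy : Gᵀ *ᵥ x ≠ 0 := by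
        intro h
        apply hx
        apply hinj
        simpa using h
      have h2 := hS.dotProduct_mulVec_pos hy
      have e : star x ⬝ᵥ (G * S * Gᵀ) *ᵥ x = star (Gᵀ *ᵥ x) ⬝ᵥ S *ᵥ (Gᵀ *ᵥ x) := by
        simp only [star_trivial]
        rw [← mulVec_mulVec, ← mulVec_mulVec, dotProduct_mulVec, ← mulVec_transpose]
      rw [e]
      exact h2
  have hAdet : IsUnit (G * S * Gᵀ).det := hA.det_pos.ne'.isUnit
  subst hΘ hGt hP
  rw [one_fin_one]
  have hrow : (Matrix.of fun (_ : Fin 1) j => μ j) = replicateRow (Fin 1) μ := rfl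
  have hcol : (Matrix.of fun i (_ : Fin 1) => μ i) = replicateCol (Fin 1) μ := rfl
  rw [hrow, hcol]
  set w := G *ᵥ μ with hw
  have key : (fromBlocks 1 0 0 G : Matrix (Fin 1 ⊕ Fin k) (Fin 1 ⊕ Fin p) ℝ) *
      (fromBlocks 1 (replicateRow (Fin 1) μ) (replicateCol (Fin 1) μ) (S + vecMulVec μ μ) :
        Matrix (Fin 1 ⊕ Fin p) (Fin 1 ⊕ Fin p) ℝ) *
      (fromBlocks 1 0 0 G : Matrix (Fin 1 ⊕ Fin k) (Fin 1 ⊕ Fin p) ℝ)ᵀ =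
      fromBlocks 1 (replicateRow (Fin 1) w) (replicateCol (Fin 1) w)
        ((G * S * Gᵀ) + vecMulVec w w) := by
    rw [fromBlocks_transpose, fromBlocks_multiply, fromBlocks_multiply]
    simp only [Matrix.mul_one, Matrix.one_mul, Matrix.zero_mul, Matrix.mul_zero,
      transpose_one, transpose_zero, add_zero, zero_add]
    have hB : replicateRow (Fin 1) μ * Gᵀ = replicateRow (Fin 1) w := by
      rw [← replicateRow_vecMul, vecMul_transpose]
    have hC : G * replicateCol (Fin 1) μ = replicateCol (Fin 1) w := by
      rw [← replicateCol_mulVec]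
    have hD : G * (S + vecMulVec μ μ) * Gᵀ = G * S * Gᵀ + vecMulVec w w := by
      have hv : vecMulVec μ μ = replicateCol (Fin 1) μ * replicateRow (Fin 1) μ :=
        vecMulVec_eq (Fin 1) μ μ
      have hv' : vecMulVec w w = replicateCol (Fin 1) w * replicateRow (Fin 1) w :=
        vecMulVec_eq (Fin 1) w w
      rw [Matrix.mul_add, Matrix.add_mul, hv,
        Matrix.mul_assoc G (replicateCol (Fin 1) μ * replicateRow (Fin 1) μ) Gᵀ,
        Matrix.mul_assoc (replicateCol (Fin 1) μ) (replicateRow (Fin 1) μ) Gᵀ, hB,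
        ← Matrix.mul_assoc G (replicateCol (Fin 1) μ) (replicateRow (Fin 1) w), hC,
        ← hv']
    rw [hB, hC, hD]
  rw [key, aug_inv S hSdet μ, aug_inv (G * S * Gᵀ) hAdet w,
    fromBlocks_transpose, fromBlocks_multiply, fromBlocks_multiply]
  simp only [Matrix.mul_one, Matrix.one_mul, Matrix.zero_mul, Matrix.mul_zero,
    transpose_one, transpose_zero, add_zero, zero_add]
  rw [fromBlocks_sub']
  have hmv : (Gᵀ * (G * S * Gᵀ)⁻¹ * G) *ᵥ μ = Gᵀ *ᵥ ((G * S * Gᵀ)⁻¹ *ᵥ w) := by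
    rw [← mulVec_mulVec, ← mulVec_mulVec]
  have hvm : μ ᵥ* (Gᵀ * (G * S * Gᵀ)⁻¹ * G) = (w ᵥ* (G * S * Gᵀ)⁻¹) ᵥ* G := by
    rw [← vecMul_vecMul, ← vecMul_vecMul, vecMul_transpose]
  have hdp : μ ⬝ᵥ (Gᵀ * (G * S * Gᵀ)⁻¹ * G) *ᵥ μ = w ⬝ᵥ (G * S * Gᵀ)⁻¹ *ᵥ w := by
    rw [hmv, dotProduct_mulVec, vecMul_transpose]
  have e1 : (Matrix.of fun (_ : Fin 1) (_ : Fin 1) => 1 + μ ⬝ᵥ S⁻¹ *ᵥ μ) -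
      (Matrix.of fun (_ : Fin 1) (_ : Fin 1) => 1 + w ⬝ᵥ (G * S * Gᵀ)⁻¹ *ᵥ w) =
      Matrix.of fun (_ : Fin 1) (_ : Fin 1) =>
        μ ⬝ᵥ S⁻¹ *ᵥ μ - μ ⬝ᵥ (Gᵀ * (G * S * Gᵀ)⁻¹ * G) *ᵥ μ := by
    ext i j
    simp [hdp]
  have e2 : -replicateRow (Fin 1) (μ ᵥ* S⁻¹) - -replicateRow (Fin 1) (w ᵥ* (G * S * Gᵀ)⁻¹) * G =
      Matrix.of fun (_ : Fin 1) j =>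
        -(μ ᵥ* S⁻¹) j + (μ ᵥ* (Gᵀ * (G * S * Gᵀ)⁻¹ * G)) j := by
    rw [Matrix.neg_mul, ← replicateRow_vecMul, ← hvm, sub_neg_eq_add]
    ext i j
    simp [replicateRow]
  have e3 : -replicateCol (Fin 1) (S⁻¹ *ᵥ μ) - Gᵀ * -replicateCol (Fin 1) ((G * S * Gᵀ)⁻¹ *ᵥ w) =
      Matrix.of fun i (_ : Fin 1) =>
        -(S⁻¹ *ᵥ μ) i + ((Gᵀ * (G * S * Gᵀ)⁻¹ * G) *ᵥ μ) i := by
    rw [Matrix.mul_neg, ← replicateCol_mulVec, ← hmv, sub_neg_eq_add]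
    ext i j
    simp [replicateCol]
  rw [e1, e2, e3]
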